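/- If k ≥ 5 and n ≥ 6k² with k dividing n, then there is no planar graph on n vertices that simultaneously contains the star C_{n,1}, the double star C_{n,2}, and the k-caterpillar C_{n,k} as subgraphs. -/
import Mathlib


open SimpleGraph

def HasMinor {V W : Type*} (G : SimpleGraph V) (H : SimpleGraph W) : Prop :=
  ∃ f : W → Set V,
    (∀ w, (f w).Nonempty) ∧
    (∀ w, (G.induce (f w)).Connected) ∧
    (Pairwise fun w₁ w₂ => Disjoint (f w₁) (f w₂)) ∧
    ∀ ⦃w₁ w₂⦄, H.Adj w₁ w₂ → ∃ a ∈ f w₁, ∃ b ∈ f w₂, G.Adj a b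

def IsPlanar {V : Type*} (G : SimpleGraph V) : Prop :=
  ¬ HasMinor G (completeGraph (Fin 5)) ∧
  ¬ HasMinor G (completeBipartiteGraph (Fin 3) (Fin 3))

def IsOuterplanar {V : Type*} (G : SimpleGraph V) : Prop :=
  ¬ HasMinor G (completeGraph (Fin 4)) ∧
  ¬ HasMinor G (completeBipartiteGraph (Fin 2) (Fin 3))

def Contains {V W : Type*} (G : SimpleGraph V) (H : SimpleGraph W) : Prop :=
  ∃ f : W ↪ V, ∀ ⦃a b⦄, H.Adj a b → G.Adj (f a) (f b)

/-- The caterpillar with spine a path on `k` vertices, each spine vertex having `m` leaves. -/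
def caterpillar (k m : ℕ) : SimpleGraph (Fin k ⊕ Fin k × Fin m) :=
  SimpleGraph.fromRel (fun a b =>
    match a, b with
    | Sum.inl i, Sum.inl j => (i : ℕ) + 1 = (j : ℕ)
    | Sum.inl i, Sum.inr p => i = p.1
    | _, _ => False)

lemma caterpillar_adj_leaf (k m : ℕ) (i : Fin k) (j : Fin m) :
    (caterpillar k m).Adj (Sum.inl i) (Sum.inr (i, j)) := by
  rw [caterpillar, SimpleGraph.fromRel_adj]
  exact ⟨by simp, Or.inl rfl⟩

lemma singleton_induce_connected {V : Type*} (G : SimpleGraph V) (x : V) :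
    (G.induce {x}).Connected := by
  rw [SimpleGraph.connected_iff]
  haveI : Subsingleton ({x} : Set V) := (Set.subsingleton_coe _).2 Set.subsingleton_singleton
  refine ⟨fun u v => ?_, ⟨⟨x, rfl⟩⟩⟩
  rw [Subsingleton.elim u v]

lemma k33_of_vertices {V : Type*} (G : SimpleGraph V) (φ ψ : Fin 3 → V)
    (hφ : Function.Injective φ) (hψ : Function.Injective ψ)
    (hd : ∀ i j, φ i ≠ ψ j)
    (hadj : ∀ i j, G.Adj (φ i) (ψ j)) :
    HasMinor G (completeBipartiteGraph (Fin 3) (Fin 3)) := by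
  refine ⟨Sum.elim (fun i => {φ i}) (fun j => {ψ j}), ?_, ?_, ?_, ?_⟩
  · rintro (i | j) <;> simp
  · rintro (i | j)
    · exact singleton_induce_connected G (φ i)
    · exact singleton_induce_connected G (ψ j)
  · rintro (i | i) (j | j) hne <;>
      simp only [Sum.elim_inl, Sum.elim_inr, Set.disjoint_singleton]
    · exact fun h => hne (by rw [hφ h])
    · exact hd i j
    · exact fun h => hd j i h.symm
    · exact fun h => hne (by rw [hψ h])
  · rintro (i | i) (j | j) hadj'
    · simp [completeBipartiteGraph] at hadj'
    · exact ⟨φ i, rfl, ψ j, rfl, hadj i j⟩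
    · exact ⟨ψ i, rfl, φ j, rfl, (hadj j i).symm⟩
    · simp [completeBipartiteGraph] at hadj'


lemma common_le_two {V : Type*} (G : SimpleGraph V)
    (hm : ¬ HasMinor G (completeBipartiteGraph (Fin 3) (Fin 3)))
    (c x y : V) (huniv : ∀ w, w ≠ c → G.Adj c w)
    (hxc : x ≠ c) (hyc : y ≠ c) (hxy : x ≠ y)
    (s : Finset V) (hs : ∀ w ∈ s, w ≠ c ∧ G.Adj x w ∧ G.Adj y w) :
    s.card ≤ 2 := by
  by_contra hgt
  push_neg at hgt
  obtain ⟨w1, w2, w3, hw1, hw2, hw3, h12, h13, h23⟩ := Finset.two_lt_card_iff.1 hgt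
  obtain ⟨hw1c, hw1x, hw1y⟩ := hs _ hw1
  obtain ⟨hw2c, hw2x, hw2y⟩ := hs _ hw2
  obtain ⟨hw3c, hw3x, hw3y⟩ := hs _ hw3
  have hcx : c ≠ x := hxc.symm
  have hcy : c ≠ y := hyc.symm
  have h1x : w1 ≠ x := hw1x.ne'
  have h2x : w2 ≠ x := hw2x.ne'
  have h3x : w3 ≠ x := hw3x.ne'
  have h1y : w1 ≠ y := hw1y.ne'
  have h2y : w2 ≠ y := hw2y.ne'
  have h3y : w3 ≠ y := hw3y.ne'
  refine hm (k33_of_vertices G ![c, x, y] ![w1, w2, w3] ?_ ?_ ?_ ?_)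
  · intro i j hij
    fin_cases i <;> fin_cases j <;> simp_all
  · intro i j hij
    fin_cases i <;> fin_cases j <;> simp_all
  · intro i j
    fin_cases i <;> fin_cases j <;> simp_all [eq_comm]
  · intro i j
    fin_cases i <;> fin_cases j <;>
      simp only [Matrix.cons_val_zero, Matrix.cons_val_one, Matrix.head_cons,
        Matrix.cons_val_two, Matrix.tail_cons]
    all_goals first
      | exact huniv _ hw1c
      | exact huniv _ hw2c
      | exact huniv _ hw3c
      | exact hw1x
      | exact hw2x
      | exact hw3x
      | exact hw1y
      | exact hw2y
      | exact hw3y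

/-- If `k ≥ 5` and `n ≥ 6k²` with `k ∣ n`, then no planar graph on `n` vertices contains the
star `C_{n,1}`, the double star `C_{n,2}` (two adjacent spine vertices with `(n−2)/2` leaves
each) and the `k`-caterpillar `C_{n,k}` simultaneously as subgraphs. -/
theorem no_planar_universal_for_three_caterpillars (k n : ℕ) (hk : 5 ≤ k)
    (hn : 6 * k ^ 2 ≤ n) (hdvd : k ∣ n)
    {V : Type*} [Fintype V] (G : SimpleGraph V) (hcard : Fintype.card V = n)
    (hplanar : IsPlanar G) :
    ¬ (Contains G (caterpillar 1 (n - 1)) ∧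
       Contains G (caterpillar 2 ((n - 2) / 2)) ∧
       Contains G (caterpillar k (n / k - 1))) := by
  classical
  rintro ⟨⟨f1, hf1⟩, ⟨f2, hf2⟩, ⟨f3, hf3⟩⟩
  have hk0 : 0 < k := by omega
  have hnm : k * (n / k) = n := Nat.mul_div_cancel' hdvd
  have hm6 : 6 * k ≤ n / k := by
    have h1 : k * (6 * k) ≤ k * (n / k) := by rw [hnm]; nlinarith
    exact Nat.le_of_mul_le_mul_left h1 hk0
  have hq30 : 30 ≤ n / k := by omega
  have hn150 : 150 ≤ n := by
    have := Nat.mul_le_mul hk hq30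
    omega
  -- the universal vertex
  set c : V := f1 (Sum.inl 0) with hcdef
  have hcadjleaf : ∀ j : Fin (n - 1), G.Adj c (f1 (Sum.inr (0, j))) :=
    fun j => hf1 (caterpillar_adj_leaf 1 (n - 1) 0 j)
  have huniv : ∀ w : V, w ≠ c → G.Adj c w := by
    set e : Fin (n - 1) → {w : V // w ≠ c} :=
      fun j => ⟨f1 (Sum.inr (0, j)), (hcadjleaf j).ne'⟩ with hedef
    have hinj : Function.Injective e := by
      intro i j hij
      have := f1.injective (Subtype.mk_eq_mk.1 hij)
      simpa using this
    have hcardsub : Fintype.card {w : V // w ≠ c} = n - 1 := by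
      have := Fintype.card_subtype_compl (fun w : V => w = c)
      simp only [hcard, Fintype.card_subtype_eq] at this
      exact this
    have hbij : Function.Bijective e :=
      (Fintype.bijective_iff_injective_and_card e).2
        ⟨hinj, by rw [Fintype.card_fin, hcardsub]⟩
    intro w hw
    obtain ⟨j, hj⟩ := hbij.2 ⟨w, hw⟩
    have : f1 (Sum.inr ((0 : Fin 1), j)) = w := congrArg Subtype.val hj
    exact this ▸ hcadjleaf j
  -- common neighbour bound
  have key : ∀ x y : V, x ≠ c → y ≠ c → x ≠ y → ∀ s : Finset V,
      (∀ w ∈ s, w ≠ c ∧ G.Adj x w ∧ G.Adj y w) → s.card ≤ 2 :=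
    fun x y hxc hyc hxy s hs => common_le_two G hplanar.2 c x y huniv hxc hyc hxy s hs
  -- the double-star high-degree vertex distinct from c
  have hx2 : ∃ x2 : Fin 2, f2 (Sum.inl x2) ≠ c := by
    by_cases h : f2 (Sum.inl 0) = c
    · refine ⟨1, fun hh => ?_⟩
      have := f2.injective (hh.trans h.symm)
      simp at this
    · exact ⟨0, h⟩
  obtain ⟨x2, hx2⟩ := hx2
  set aV : V := f2 (Sum.inl x2) with haVdef
  have haleaf : ∀ j : Fin ((n - 2) / 2), G.Adj aV (f2 (Sum.inr (x2, j))) :=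
    fun j => hf2 (caterpillar_adj_leaf 2 ((n - 2) / 2) x2 j)
  set A : Finset V :=
    (Finset.univ.image fun j : Fin ((n - 2) / 2) => f2 (Sum.inr (x2, j))).erase c with hAdef
  have hAcard : (n - 2) / 2 - 1 ≤ A.card := by
    have h1 : (Finset.univ.image fun j : Fin ((n - 2) / 2) => f2 (Sum.inr (x2, j))).card
        = (n - 2) / 2 := by
      rw [Finset.card_image_of_injective _ (fun i j hij => by
        have := f2.injective hij; simpa using this)]
      simp
    have h2 := Finset.pred_card_le_card_erase
      (s := Finset.univ.image fun j : Fin ((n - 2) / 2) => f2 (Sum.inr (x2, j))) (a := c)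
    rw [hAdef]
    omega
  have hAmem : ∀ w ∈ A, w ≠ c ∧ G.Adj aV w := by
    intro w hw
    rw [hAdef, Finset.mem_erase] at hw
    obtain ⟨hwc, hw⟩ := hw
    obtain ⟨j, -, rfl⟩ := Finset.mem_image.1 hw
    exact ⟨hwc, haleaf j⟩
  -- the spine vertices of the k-caterpillar
  have hsleaf : ∀ (i : Fin k) (j : Fin (n / k - 1)),
      G.Adj (f3 (Sum.inl i)) (f3 (Sum.inr (i, j))) :=
    fun i j => hf3 (caterpillar_adj_leaf k (n / k - 1) i j)
  set t : Finset (Fin k) :=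
    Finset.univ.filter fun i : Fin k =>
      ¬(f3 (Sum.inl i) = c ∨ f3 (Sum.inl i) = aV) with htdef
  have ht : k - 2 ≤ t.card := by
    have h1 : (Finset.univ.filter fun i : Fin k => f3 (Sum.inl i) = c).card ≤ 1 :=
      Finset.card_le_one.2 (by
        intro a ha b hb
        simp only [Finset.mem_filter] at ha hb
        simpa using f3.injective (ha.2.trans hb.2.symm))
    have h2 : (Finset.univ.filter fun i : Fin k => f3 (Sum.inl i) = aV).card ≤ 1 :=
      Finset.card_le_one.2 (by
        intro a ha b hb
        simp only [Finset.mem_filter] at ha hb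
        simpa using f3.injective (ha.2.trans hb.2.symm))
    have h3 := Finset.card_filter_add_card_filter_not
      (s := (Finset.univ : Finset (Fin k)))
      (p := fun i => f3 (Sum.inl i) = c ∨ f3 (Sum.inl i) = aV)
    have h4 : (Finset.univ.filter fun i : Fin k => f3 (Sum.inl i) = c ∨ f3 (Sum.inl i) = aV)
        ⊆ (Finset.univ.filter fun i : Fin k => f3 (Sum.inl i) = c)
          ∪ (Finset.univ.filter fun i : Fin k => f3 (Sum.inl i) = aV) := by
      intro i hi
      simp only [Finset.mem_filter, Finset.mem_union] at *
      tauto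
    have h5 := (Finset.card_le_card h4).trans (Finset.card_union_le _ _)
    have h6 : (Finset.univ : Finset (Fin k)).card = k := by simp
    rw [htdef]
    omega
  -- leaf sets
  set L : Fin k → Finset V := fun i =>
    ((Finset.univ.image fun j : Fin (n / k - 1) => f3 (Sum.inr (i, j))).erase c) \ A with hLdef
  have hLcard : ∀ i ∈ t, n / k - 4 ≤ (L i).card := by
    intro i hit
    rw [htdef, Finset.mem_filter, not_or] at hit
    obtain ⟨-, hic, hia⟩ := hit
    have h1 : (Finset.univ.image fun j : Fin (n / k - 1) => f3 (Sum.inr (i, j))).card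
        = n / k - 1 := by
      rw [Finset.card_image_of_injective _ (fun a b hab => by
        have := f3.injective hab; simpa using this)]
      simp
    have h2 := Finset.pred_card_le_card_erase
      (s := Finset.univ.image fun j : Fin (n / k - 1) => f3 (Sum.inr (i, j))) (a := c)
    have h4 : (((Finset.univ.image fun j : Fin (n / k - 1) => f3 (Sum.inr (i, j))).erase c)
        ∩ A).card ≤ 2 := by
      refine key aV (f3 (Sum.inl i)) hx2 hic (fun h => hia h.symm) _ ?_
      intro w hw
      rw [Finset.mem_inter] at hw
      obtain ⟨hws, hwA⟩ := hw
      rw [Finset.mem_erase] at hws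
      obtain ⟨hwc, hws⟩ := hws
      obtain ⟨j, -, rfl⟩ := Finset.mem_image.1 hws
      exact ⟨hwc, (hAmem _ hwA).2, hsleaf i j⟩
    have h5 := Finset.card_sdiff_add_card_inter
      ((Finset.univ.image fun j : Fin (n / k - 1) => f3 (Sum.inr (i, j))).erase c) A
    simp only [hLdef]
    omega
  have hLdisj : ∀ x ∈ t, ∀ y ∈ t, x ≠ y → Disjoint (L x) (L y) := by
    intro x _ y _ hxy
    rw [Finset.disjoint_left]
    intro w hwx hwy
    simp only [hLdef, Finset.mem_sdiff, Finset.mem_erase, Finset.mem_image,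
      Finset.mem_univ, true_and] at hwx hwy
    obtain ⟨⟨-, j1, hj1⟩, -⟩ := hwx
    obtain ⟨⟨-, j2, hj2⟩, -⟩ := hwy
    have := f3.injective (hj1.trans hj2.symm)
    simp only [Sum.inr.injEq, Prod.mk.injEq] at this
    exact hxy this.1
  set U : Finset V := A ∪ t.biUnion L with hUdef
  have hUdisj : Disjoint A (t.biUnion L) := by
    rw [Finset.disjoint_biUnion_right]
    intro i _
    simp only [hLdef]
    exact Finset.disjoint_sdiff
  have hUcard : U.card = A.card + ∑ i ∈ t, (L i).card := by
    rw [hUdef, Finset.card_union_of_disjoint hUdisj, Finset.card_biUnion hLdisj]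
  have hUsub : U ⊆ Finset.univ.erase c := by
    intro w hw
    rw [hUdef, Finset.mem_union] at hw
    refine Finset.mem_erase.2 ⟨?_, Finset.mem_univ _⟩
    rcases hw with hw | hw
    · exact (hAmem w hw).1
    · obtain ⟨i, -, hw⟩ := Finset.mem_biUnion.1 hw
      simp only [hLdef, Finset.mem_sdiff, Finset.mem_erase] at hw
      exact hw.1.1
  have hUle : U.card ≤ n - 1 := by
    have := Finset.card_le_card hUsub
    rwa [Finset.card_erase_of_mem (Finset.mem_univ c), Finset.card_univ, hcard] at this
  have hsum : (k - 2) * (n / k - 4) ≤ ∑ i ∈ t, (L i).card := by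
    calc (k - 2) * (n / k - 4) ≤ t.card * (n / k - 4) :=
          Nat.mul_le_mul_right _ ht
      _ ≤ ∑ i ∈ t, (L i).card := by
          have := Finset.card_nsmul_le_sum t (fun i => (L i).card) (n / k - 4) hLcard
          simpa [smul_eq_mul] using this
  -- final arithmetic
  have hchain : (n - 2) / 2 - 1 + (k - 2) * (n / k - 4) ≤ n - 1 := by
    have h := Nat.add_le_add hAcard hsum
    omega
  have hnm' := hnm
  generalize hg : n / k = q at hchain hnm' hm6
  obtain ⟨K, hK⟩ : ∃ K, k = K + 2 := ⟨k - 2, by omega⟩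
  obtain ⟨Q, hQ⟩ : ∃ Q, q = Q + 4 := ⟨q - 4, by omega⟩
  have hprod : (k - 2) * (q - 4) = K * Q := by rw [hK, hQ]; simp
  have hP : K * Q + 4 * k + 2 * q = n + 8 := by rw [← hnm', hK, hQ]; ring
  have hP2 : 4 * k + 2 * q ≤ K * Q + 4 := by
    have hK3 : 3 ≤ K := by omega
    have hQ6 : 6 * K + 8 ≤ Q := by omega
    have h1 : 3 * Q ≤ K * Q := Nat.mul_le_mul_right _ hK3
    have h2 : 4 * k + 2 * q = 4 * K + 2 * Q + 16 := by rw [hK, hQ]; ring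
    omega
  rw [hprod] at hchain
  omega
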